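/- For every integer n ≥ 2: the sum over m from 1 to n, and over compositions (λ₁,…,λ_m) of n into m positive parts, of ((−1)^{m+1}/m) · (n!/(λ₁!⋯λ_m!)) · (2^n − 2m) equals 2·(−1)^n. -/

import Mathlib

section StmtAuxAll
open Finset


private lemma fwd_zero (n : ℕ) (c : ℝ) : ∀ N, n < N →
    (fwdDiff (1:ℕ))^[N] (fun x : ℕ => ((x:ℝ) + c) ^ n) = 0 := by
  induction n using Nat.strong_induction_on with
  | _ n IH =>
    intro N hN
    obtain ⟨N', rfl⟩ : ∃ N', N = N' + 1 := ⟨N - 1, by omega⟩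
    rw [Function.iterate_succ_apply]
    have hstep : fwdDiff (1:ℕ) (fun x : ℕ => ((x:ℝ) + c) ^ n)
        = ∑ i ∈ range n, (n.choose i : ℝ) • (fun x : ℕ => ((x:ℝ) + c) ^ i) := by
      funext x
      have hb : ((x:ℝ) + c + 1) ^ n
          = ∑ i ∈ range (n+1), ((x:ℝ)+c)^i * 1 ^ (n-i) * (n.choose i) := add_pow _ _ _
      simp only [one_pow, mul_one] at hb
      have : fwdDiff (1:ℕ) (fun x : ℕ => ((x:ℝ) + c) ^ n) x
          = ((x:ℝ) + c + 1) ^ n - ((x:ℝ) + c) ^ n := by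
        simp [fwdDiff]
        ring_nf
      rw [this, hb, sum_range_succ]
      simp only [Nat.choose_self, Nat.cast_one, mul_one, add_sub_cancel_right]
      rw [Finset.sum_apply]
      exact Finset.sum_congr rfl fun i _ => by simp [mul_comm]
    rw [hstep, fwdDiff_iter_finset_sum]
    funext y
    simp only [Finset.sum_apply, Pi.zero_apply]
    refine Finset.sum_eq_zero fun i hi => ?_
    have hi2 := mem_range.1 hi
    rw [fwdDiff_iter_const_smul]
    rw [IH i (mem_range.1 hi) N' (by omega)]
    simp

private lemma pd (n N : ℕ) (hn : n < N) (c : ℝ) :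
    ∑ k ∈ range (N+1), (-1:ℝ)^k * (N.choose k) * ((k:ℝ) + c)^n = 0 := by
  have h := fwdDiff_iter_eq_sum_shift (1:ℕ) (fun x : ℕ => ((x:ℝ) + c) ^ n) N 0
  rw [fwd_zero n c N hn] at h
  simp only [Pi.zero_apply, zero_add, smul_eq_mul] at h
  have h2 : ∑ k ∈ range (N+1), (-1:ℝ)^(N-k) * (N.choose k) * ((k:ℝ) + c)^n = 0 := by
    rw [eq_comm] at h
    convert h using 2 with k hk
    push_cast
    simp [smul_eq_mul, mul_assoc]
  have := congrArg (fun x => (-1:ℝ)^N * x) h2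
  simp only [mul_zero, Finset.mul_sum] at this
  rw [← this]
  refine Finset.sum_congr rfl fun k hk => ?_
  have hk' : k ≤ N := by simpa using Nat.lt_succ_iff.1 (mem_range.1 hk)
  have : (-1:ℝ)^N * (-1:ℝ)^(N-k) = (-1:ℝ)^k := by
    rw [← pow_add]
    have : N + (N - k) = 2*(N-k) + k := by omega
    rw [this, pow_add, pow_mul]
    simp
  rw [← mul_assoc, ← mul_assoc, this]


-- triangle swap
lemma swap_tri (n : ℕ) (F : ℕ → ℕ → ℝ) :
    ∑ m ∈ Icc 1 n, ∑ j ∈ Icc 1 m, F m j = ∑ j ∈ Icc 1 n, ∑ m ∈ Icc j n, F m j := by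
  have h1 : ∀ m ∈ Icc 1 n, ∑ j ∈ Icc 1 m, F m j
      = ∑ j ∈ Icc 1 n, if j ≤ m then F m j else 0 := by
    intro m hm
    rw [← Finset.sum_filter]
    congr 1
    ext j
    simp only [mem_filter, mem_Icc] at *
    omega
  rw [Finset.sum_congr rfl h1, Finset.sum_comm]
  refine Finset.sum_congr rfl fun j hj => ?_
  rw [← Finset.sum_filter]
  congr 1
  ext m
  simp only [mem_filter, mem_Icc] at *
  omega

lemma range_to_Icc (N : ℕ) (f : ℕ → ℝ) :
    ∑ k ∈ range (N+1), f k = f 0 + ∑ k ∈ Icc 1 N, f k := by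
  have : range (N+1) = insert 0 (Icc 1 N) := by
    ext k; simp [mem_range, mem_insert, mem_Icc]; omega
  rw [this, Finset.sum_insert (by simp)]

lemma icc2_reindex (n : ℕ) (f : ℕ → ℝ) (hn : 1 ≤ n) :
    ∑ k ∈ Icc 2 (n+1), f k = ∑ j ∈ Icc 1 n, f (j+1) := by
  refine Finset.sum_nbij' (fun k => k - 1) (fun j => j + 1) ?_ ?_ ?_ ?_ ?_ <;>
    (intros; simp only [mem_Icc] at *) <;> first | omega | (congr 1; omega)

-- Identity I
lemma idI (n : ℕ) (hn : 1 ≤ n) :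
    ∑ m ∈ Icc 1 n, (-1:ℝ)^(m+1) *
      (∑ j ∈ range (m+1), (-1:ℝ)^(m-j) * (m.choose j) * (j:ℝ)^n)
    = (-1:ℝ)^(n+1) := by
  have key : ∀ m ∈ Icc 1 n, (-1:ℝ)^(m+1) *
      (∑ j ∈ range (m+1), (-1:ℝ)^(m-j) * (m.choose j) * (j:ℝ)^n)
      = ∑ j ∈ Icc 1 m, -(-1:ℝ)^j * (m.choose j) * (j:ℝ)^n := by
    intro m hm
    rw [Finset.mul_sum, range_to_Icc m (fun j => (-1:ℝ)^(m+1) * ((-1:ℝ)^(m-j) * (m.choose j) * (j:ℝ)^n))]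
    have h0 : (0:ℝ)^n = 0 := zero_pow (by omega)
    simp only [Nat.cast_zero, h0, mul_zero, zero_add]
    refine Finset.sum_congr rfl fun j hj => ?_
    simp only [mem_Icc] at hj
    have hsign : (-1:ℝ)^(m+1) * (-1:ℝ)^(m-j) = -(-1:ℝ)^j := by
      rw [← pow_add]
      have : m + 1 + (m - j) = 2*(m-j) + (j + 1) := by omega
      rw [this, pow_add, pow_mul]
      simp [pow_succ]
    rw [← mul_assoc, ← mul_assoc, hsign]
  rw [Finset.sum_congr rfl key, swap_tri]
  have inner : ∀ j ∈ Icc 1 n, ∑ m ∈ Icc j n, -(-1:ℝ)^j * (m.choose j) * (j:ℝ)^n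
      = -(-1:ℝ)^j * ((n+1).choose (j+1)) * (j:ℝ)^n := by
    intro j hj
    have : ∑ m ∈ Icc j n, -(-1:ℝ)^j * (m.choose j) * (j:ℝ)^n
        = -(-1:ℝ)^j * (∑ m ∈ Icc j n, (m.choose j : ℝ)) * (j:ℝ)^n := by
      rw [Finset.mul_sum, Finset.sum_mul]
    rw [this]
    congr 2
    rw [← Nat.cast_sum, Nat.sum_Icc_choose]
  rw [Finset.sum_congr rfl inner]
  -- now use pd with N = n+1, c = -1
  have h := pd n (n+1) (by omega) (-1)
  rw [range_to_Icc (n+1) _] at h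
  have h1 : Icc 1 (n+1) = insert 1 (Icc 2 (n+1)) := by
    ext k; simp [mem_insert, mem_Icc]; omega
  rw [h1, Finset.sum_insert (by simp), icc2_reindex n _ hn] at h
  simp only [Nat.cast_zero, Nat.cast_one, zero_add, Nat.choose_zero_right, Nat.cast_ofNat] at h
  have hz : ((1:ℝ) + -1)^n = 0 := by
    rw [show (1:ℝ) + -1 = 0 by ring, zero_pow (by omega)]
  rw [hz] at h
  -- h : (-1)^0 * 1 * (0 - 1)^n + ((-1)^1 * (n+1).choose 1 * 0 + Σ ...) = 0
  simp only [pow_zero, one_mul, mul_zero, zero_add, pow_one, mul_zero] at h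
  -- now h : (-1)^n + ∑ j in Icc 1 n, (-1)^(j+1) * ((n+1).choose (j+1)) * ((j+1:ℕ):ℝ + -1)^n = 0
  have : ∑ j ∈ Icc 1 n, -(-1:ℝ)^j * (((n+1).choose (j+1)):ℝ) * (j:ℝ)^n
      = ∑ j ∈ Icc 1 n, (-1:ℝ)^(j+1) * (((n+1).choose (j+1)):ℝ) * (((j+1:ℕ):ℝ) + -1)^n := by
    refine Finset.sum_congr rfl fun j hj => ?_
    have : (((j+1:ℕ):ℝ) + -1) = (j:ℝ) := by push_cast; ring
    rw [this, pow_succ]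
    ring
  rw [this]
  have hfin : (-1:ℝ)^(n+1) = -(-1:ℝ)^n := by rw [pow_succ]; ring
  rw [hfin]
  linarith [h]


-- hockey stick shifted, real, with division
lemma inner2 (n j : ℕ) (hj : 1 ≤ j) :
    ∑ m ∈ Icc j n, ((m.choose j : ℝ) / m) = (n.choose j : ℝ) / j := by
  have step : ∀ m ∈ Icc j n, ((m.choose j : ℝ) / m) = ((m-1).choose (j-1) : ℝ) / j := by
    intro m hm
    simp only [mem_Icc] at hm
    have hm1 : 1 ≤ m := le_trans hj hm.1
    have key : m * ((m-1).choose (j-1)) = m.choose j * j := by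
      have := Nat.add_one_mul_choose_eq (m-1) (j-1)
      have e1 : m - 1 + 1 = m := by omega
      have e2 : j - 1 + 1 = j := by omega
      rw [e1, e2] at this
      exact this
    have keyR : (m:ℝ) * ((m-1).choose (j-1) : ℝ) = (m.choose j : ℝ) * j := by
      exact_mod_cast congrArg (Nat.cast : ℕ → ℝ) key
    field_simp
    linarith [keyR]
  rw [Finset.sum_congr rfl step]
  rcases le_or_gt j n with hjn | hjn
  · have reidx : ∑ m ∈ Icc j n, (((m-1).choose (j-1) : ℝ)) / j
        = ∑ m' ∈ Icc (j-1) (n-1), ((m'.choose (j-1) : ℝ)) / j := by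
      refine Finset.sum_nbij' (fun m => m - 1) (fun m' => m' + 1) ?_ ?_ ?_ ?_ ?_ <;>
        (intros a ha; simp only [mem_Icc] at *) <;> first | omega | (congr 2; omega)
    rw [reidx, ← Finset.sum_div]
    congr 1
    rw [← Nat.cast_sum, Nat.sum_Icc_choose]
    congr 2 <;> omega
  · rw [Finset.Icc_eq_empty (by omega), Nat.choose_eq_zero_of_lt hjn]
    simp

lemma idII (n : ℕ) (hn : 2 ≤ n) :
    ∑ m ∈ Icc 1 n, ((-1:ℝ)^(m+1) / m) *
      (∑ j ∈ range (m+1), (-1:ℝ)^(m-j) * (m.choose j) * (j:ℝ)^n)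
    = 0 := by
  have key : ∀ m ∈ Icc 1 n, ((-1:ℝ)^(m+1) / m) *
      (∑ j ∈ range (m+1), (-1:ℝ)^(m-j) * (m.choose j) * (j:ℝ)^n)
      = ∑ j ∈ Icc 1 m, -(-1:ℝ)^j * ((m.choose j : ℝ) / m) * (j:ℝ)^n := by
    intro m hm
    simp only [mem_Icc] at hm
    rw [Finset.mul_sum, range_to_Icc m (fun j => ((-1:ℝ)^(m+1)/m) * ((-1:ℝ)^(m-j) * (m.choose j) * (j:ℝ)^n))]
    have h0 : (0:ℝ)^n = 0 := zero_pow (by omega)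
    simp only [Nat.cast_zero, h0, mul_zero, zero_add]
    refine Finset.sum_congr rfl fun j hj => ?_
    simp only [mem_Icc] at hj
    have hsign : (-1:ℝ)^(m+1) * (-1:ℝ)^(m-j) = -(-1:ℝ)^j := by
      rw [← pow_add]
      have : m + 1 + (m - j) = 2*(m-j) + (j + 1) := by omega
      rw [this, pow_add, pow_mul]
      simp [pow_succ]
    have expand : ((-1:ℝ)^(m+1)/m) * ((-1:ℝ)^(m-j) * (m.choose j : ℝ) * (j:ℝ)^n)
        = ((-1:ℝ)^(m+1) * (-1:ℝ)^(m-j)) * (((m.choose j : ℝ))/m) * (j:ℝ)^n := by ring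
    rw [expand, hsign]
  rw [Finset.sum_congr rfl key, swap_tri]
  have inner : ∀ j ∈ Icc 1 n, ∑ m ∈ Icc j n, -(-1:ℝ)^j * ((m.choose j : ℝ) / m) * (j:ℝ)^n
      = -(-1:ℝ)^j * (n.choose j : ℝ) * (j:ℝ)^(n-1) := by
    intro j hj
    simp only [mem_Icc] at hj
    have : ∑ m ∈ Icc j n, -(-1:ℝ)^j * ((m.choose j : ℝ) / m) * (j:ℝ)^n
        = -(-1:ℝ)^j * (∑ m ∈ Icc j n, ((m.choose j : ℝ)/m)) * (j:ℝ)^n := by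
      rw [Finset.mul_sum, Finset.sum_mul]
    rw [this, inner2 n j hj.1]
    have hjpos : (0:ℝ) < j := by exact_mod_cast hj.1
    have : (j:ℝ)^n = (j:ℝ)^(n-1) * j := by
      rw [← pow_succ]
      congr 1
      omega
    rw [this]
    field_simp
  rw [Finset.sum_congr rfl inner]
  have h := pd (n-1) n (by omega) 0
  obtain ⟨n', rfl⟩ : ∃ n', n = n' + 1 := ⟨n - 1, by omega⟩
  rw [range_to_Icc (n'+1) _] at h
  simp only [Nat.cast_zero, zero_add] at h
  rw [zero_pow (by omega : n'+1-1 ≠ 0)] at h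
  simp only [mul_zero, zero_add] at h
  calc ∑ j ∈ Icc 1 (n'+1), -(-1:ℝ)^j * ((n'+1).choose j : ℝ) * (j:ℝ)^(n'+1-1)
      = -∑ k ∈ Icc 1 (n'+1), (-1:ℝ)^k * ((n'+1).choose k : ℝ) * ((k:ℝ)+0)^(n'+1-1) := by
        rw [← Finset.sum_neg_distrib]
        refine Finset.sum_congr rfl fun j hj => by ring
    _ = 0 := by rw [h]; ring

noncomputable def W (n m : ℕ) : ℝ := ∑ j ∈ range (m+1), (-1:ℝ)^(m-j) * (m.choose j) * (j:ℝ)^n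

lemma swap_tri0 (n : ℕ) (F : ℕ → ℕ → ℝ) :
    ∑ m ∈ range (n+1), ∑ j ∈ range (m+1), F m j
      = ∑ j ∈ range (n+1), ∑ m ∈ Icc j n, F m j := by
  have h1 : ∀ m ∈ range (n+1), ∑ j ∈ range (m+1), F m j
      = ∑ j ∈ range (n+1), if j ≤ m then F m j else 0 := by
    intro m hm
    simp only [mem_range] at hm
    rw [← Finset.sum_filter]
    congr 1
    ext j
    simp only [mem_filter, mem_range]
    omega
  rw [Finset.sum_congr rfl h1, Finset.sum_comm]
  refine Finset.sum_congr rfl fun j hj => ?_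
  simp only [mem_range] at hj
  rw [← Finset.sum_filter]
  congr 1
  ext m
  simp only [mem_filter, mem_range, mem_Icc]
  omega

lemma alt_sum_choose_real (N : ℕ) :
    ∑ d ∈ range (N+1), (-1:ℝ)^d * (N.choose d) = if N = 0 then 1 else 0 := by
  have h := Int.alternating_sum_range_choose (n := N)
  have h3 := congrArg (fun z : ℤ => (z : ℝ)) h
  simp only [Int.cast_sum, Int.cast_mul, Int.cast_pow, Int.cast_neg, Int.cast_one,
    Int.cast_natCast, Int.cast_ite, Int.cast_zero] at h3
  simpa using h3

lemma W_inv (n m : ℕ) :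
    ∑ k ∈ range (m+1), (m.choose k : ℝ) * W n k = (m:ℝ)^n := by
  unfold W
  simp only [Finset.mul_sum]
  rw [swap_tri0]
  have inner : ∀ j ∈ range (m+1),
      ∑ k ∈ Icc j m, (m.choose k : ℝ) * ((-1:ℝ)^(k-j) * (k.choose j) * (j:ℝ)^n)
      = (if j = m then 1 else 0) * (m.choose j : ℝ) * (j:ℝ)^n := by
    intro j hj
    simp only [mem_range] at hj
    have step : ∀ k ∈ Icc j m, (m.choose k : ℝ) * ((-1:ℝ)^(k-j) * (k.choose j) * (j:ℝ)^n)
        = (m.choose j : ℝ) * ((-1:ℝ)^(k-j) * ((m-j).choose (k-j)) * (j:ℝ)^n) := by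
      intro k hk
      simp only [mem_Icc] at hk
      have := Nat.choose_mul (n := m) (hk.1)
      have hc : (m.choose k : ℝ) * (k.choose j : ℝ) = (m.choose j : ℝ) * ((m-j).choose (k-j) : ℝ) := by
        exact_mod_cast congrArg (Nat.cast : ℕ → ℝ) this
      have e : (m.choose k : ℝ) * ((-1:ℝ)^(k-j) * (k.choose j) * (j:ℝ)^n)
          = ((m.choose k : ℝ) * (k.choose j:ℝ)) * ((-1:ℝ)^(k-j) * (j:ℝ)^n) := by ring
      rw [e, hc]
      ring
    rw [Finset.sum_congr rfl step]
    have reidx : ∑ k ∈ Icc j m, (m.choose j : ℝ) * ((-1:ℝ)^(k-j) * ((m-j).choose (k-j)) * (j:ℝ)^n)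
        = ∑ d ∈ range (m-j+1), (m.choose j : ℝ) * ((-1:ℝ)^d * ((m-j).choose d) * (j:ℝ)^n) := by
      refine Finset.sum_nbij' (fun k => k - j) (fun d => d + j) ?_ ?_ ?_ ?_ ?_ <;>
        (intro a ha; simp only [mem_Icc, mem_range] at *) <;>
          first | omega | (congr 3 <;> omega)
    rw [reidx]
    have : ∑ d ∈ range (m-j+1), (m.choose j : ℝ) * ((-1:ℝ)^d * ((m-j).choose d) * (j:ℝ)^n)
        = (m.choose j : ℝ) * (∑ d ∈ range (m-j+1), (-1:ℝ)^d * ((m-j).choose d)) * (j:ℝ)^n := by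
      rw [Finset.mul_sum, Finset.sum_mul]
      exact Finset.sum_congr rfl fun d _ => by ring
    rw [this, alt_sum_choose_real]
    by_cases hjm : j = m
    · simp [hjm]
    · have hne : m - j ≠ 0 := by omega
      simp [hjm, hne]
  rw [Finset.sum_congr rfl inner]
  have fin : ∀ x ∈ range (m+1), (if x = m then (1:ℝ) else 0) * (m.choose x : ℝ) * (x:ℝ)^n
      = if x = m then (m.choose x : ℝ) * (x:ℝ)^n else 0 := by
    intro x _
    split <;> simp
  rw [Finset.sum_congr rfl fin, Finset.sum_ite_eq' (range (m+1)) m]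
  simp



variable {ι : Type*} [DecidableEq ι]

noncomputable def U (n : ℕ) (s : Finset ι) : ℝ :=
  ∑ f ∈ (s.piAntidiag n).filter (fun f => ∀ i ∈ s, f i ≠ 0), (Nat.multinomial s f : ℝ)

lemma multinomial_subset (t s : Finset ι) (f : ι → ℕ) (hts : t ⊆ s)
    (hf : ∀ i ∈ s, i ∉ t → f i = 0) : Nat.multinomial s f = Nat.multinomial t f := by
  unfold Nat.multinomial
  rw [Finset.sum_subset hts (fun i hi hni => hf i hi hni),
    Finset.prod_subset hts (fun i hi hni => by rw [hf i hi hni]; rfl)]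

lemma U_powerset (n : ℕ) (s : Finset ι) :
    ∑ t ∈ s.powerset, U n t = ((s.card : ℝ))^n := by
  classical
  have hpow := Finset.sum_pow_eq_sum_piAntidiag s (fun _ => (1:ℝ)) n
  simp only [one_pow, prod_const_one, mul_one, Finset.sum_const, nsmul_eq_mul, mul_one] at hpow
  -- hpow : (card s : ℝ)^n = ∑ f in piAntidiag s n, multinomial s f
  have hpart : s.piAntidiag n
      = s.powerset.biUnion (fun t => (t.piAntidiag n).filter (fun f => ∀ i ∈ t, f i ≠ 0)) := by
    ext f
    simp only [mem_biUnion, mem_powerset, mem_filter, mem_piAntidiag]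
    constructor
    · rintro ⟨hsum, hsupp⟩
      refine ⟨s.filter (fun i => f i ≠ 0), Finset.filter_subset _ _, ⟨?_, ?_⟩, ?_⟩
      · rw [← hsum]
        rw [Finset.sum_filter_ne_zero]
      · intro i hi
        exact mem_filter.2 ⟨hsupp i hi, hi⟩
      · intro i hi
        exact (mem_filter.1 hi).2
    · rintro ⟨t, hts, ⟨hsum, hsupp⟩, hpos⟩
      constructor
      · rw [← hsum]
        exact (Finset.sum_subset hts (fun i _ hni => by
          by_contra hne
          exact hni (hsupp i hne))).symm
      · intro i hi
        exact hts (hsupp i hi)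
  have hdisj : (↑s.powerset : Set (Finset ι)).PairwiseDisjoint
      (fun t => (t.piAntidiag n).filter (fun f => ∀ i ∈ t, f i ≠ 0)) := by
    intro t1 h1 t2 h2 hne
    refine Finset.disjoint_left.2 fun f hf1 hf2 => ?_
    simp only [mem_filter, mem_piAntidiag] at hf1 hf2
    apply hne
    have : t1 = t2 := by
      ext i
      constructor
      · intro hi
        exact hf2.1.2 i (hf1.2 i hi)
      · intro hi
        exact hf1.1.2 i (hf2.2 i hi)
    exact this
  rw [hpart, Finset.sum_biUnion hdisj] at hpow
  rw [hpow]
  refine Finset.sum_congr rfl fun t ht => ?_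
  unfold U
  refine Finset.sum_congr rfl fun f hf => ?_
  simp only [mem_filter, mem_piAntidiag] at hf
  congr 1
  exact (multinomial_subset t s f (Finset.mem_powerset.1 ht)
    (fun i _ hni => by
      by_contra hne
      exact hni (hf.1.2 i hne))).symm

lemma U_eq_W (n : ℕ) (s : Finset ι) : U n s = W n s.card := by
  classical
  induction s using Finset.strongInduction with
  | _ s IH =>
    have hps := U_powerset n s
    have hsplit : ∑ t ∈ s.powerset, U n t = U n s + ∑ t ∈ s.powerset.erase s, U n t := by
      rw [← Finset.sum_erase_add _ _ (Finset.mem_powerset_self s)]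
      ring
    have hW : ∑ t ∈ s.powerset, W n t.card = W n s.card + ∑ t ∈ s.powerset.erase s, W n t.card := by
      rw [← Finset.sum_erase_add _ _ (Finset.mem_powerset_self s)]
      ring
    have hWsum : ∑ t ∈ s.powerset, W n t.card = ((s.card : ℝ))^n := by
      rw [Finset.sum_powerset s (fun t => W n t.card)]
      have : ∀ j ∈ range (s.card + 1), ∑ t ∈ Finset.powersetCard j s, W n t.card
          = ((s.card).choose j : ℝ) * W n j := by
        intro j _
        rw [Finset.sum_powersetCard j s (fun k => W n k), nsmul_eq_mul]
      rw [Finset.sum_congr rfl this, W_inv]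
    have hrest : ∑ t ∈ s.powerset.erase s, U n t = ∑ t ∈ s.powerset.erase s, W n t.card := by
      refine Finset.sum_congr rfl fun t ht => ?_
      have h1 := Finset.mem_erase.1 ht
      exact IH t (Finset.ssubset_iff_subset_ne.2 ⟨Finset.mem_powerset.1 h1.2, h1.1⟩)
    rw [hsplit, hrest] at hps
    rw [hW] at hWsum
    linarith

lemma ofFn_getD {m : ℕ} (l : List ℕ) (h : l.length = m) :
    List.ofFn (fun k : Fin m => l.getD (k : ℕ) 0) = l := by
  apply List.ext_getElem
  · simp [h]
  · intro i h1 h2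
    simp only [List.getElem_ofFn]
    rw [List.getD_eq_getElem]

lemma bridge (n m : ℕ) :
    ∑ c ∈ Finset.univ.filter (fun c : Composition n => c.length = m),
      ((n.factorial : ℝ) / ((c.blocks.map Nat.factorial).prod : ℝ))
    = ∑ f ∈ ((Finset.univ : Finset (Fin m)).piAntidiag n).filter
        (fun f => ∀ i ∈ (Finset.univ : Finset (Fin m)), f i ≠ 0),
        (Nat.multinomial Finset.univ f : ℝ) := by
  refine Finset.sum_bij' (fun c _ => fun k : Fin m => c.blocks.getD (k : ℕ) 0)
    (fun f hf => ⟨List.ofFn f, ?_, ?_⟩) ?_ ?_ ?_ ?_ ?_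
  · intro i hi
    simp only [List.mem_ofFn] at hi
    obtain ⟨k, rfl⟩ := hi
    simp only [mem_filter, mem_piAntidiag, mem_univ, forall_true_left] at hf
    exact Nat.pos_of_ne_zero (hf.2 k)
  · simp only [mem_filter, mem_piAntidiag] at hf
    rw [List.sum_ofFn]
    exact hf.1.1
  · intro c hc
    simp only [mem_filter, mem_univ, true_and] at hc
    have hofn := ofFn_getD c.blocks hc
    have hlen : c.blocks.length = m := hc
    have hk : ∀ k : Fin m, (k : ℕ) < c.blocks.length := by
      intro k
      rw [hlen]
      exact k.isLt
    rw [mem_filter, mem_piAntidiag]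
    refine ⟨⟨?_, fun i _ => mem_univ i⟩, fun k _ => ?_⟩
    · have h2 := congrArg List.sum hofn
      rw [List.sum_ofFn] at h2
      exact h2.trans c.blocks_sum
    · show c.blocks.getD (↑k) 0 ≠ 0
      rw [List.getD_eq_getElem _ _ (hk k)]
      exact (c.blocks_pos (c.blocks.getElem_mem _)).ne'
  · intro f hf
    rw [mem_filter]
    exact ⟨mem_univ _, by simp [Composition.length]⟩
  · intro c hc
    simp only [mem_filter, mem_univ, true_and] at hc
    exact Composition.ext (ofFn_getD c.blocks hc)
  · intro f hf
    funext k
    simp only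
    rw [List.getD_eq_getElem _ _ (by simp [Fin.is_lt])]
    simp
  · intro c hc
    simp only [mem_filter, mem_univ, true_and] at hc
    have hofn := ofFn_getD c.blocks hc
    have hspec := Nat.multinomial_spec (Finset.univ : Finset (Fin m))
      (fun k : Fin m => c.blocks.getD (k : ℕ) 0)
    have hsum : ∑ k : Fin m, c.blocks.getD (k : ℕ) 0 = n := by
      have h2 := congrArg List.sum hofn
      rw [List.sum_ofFn] at h2
      exact h2.trans c.blocks_sum
    rw [hsum] at hspec
    have hprod : ∏ k : Fin m, (c.blocks.getD (k : ℕ) 0).factorial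
        = (c.blocks.map Nat.factorial).prod := by
      have h2 := congrArg (fun l => (l.map Nat.factorial).prod) hofn
      simp only [List.map_ofFn, List.prod_ofFn, Function.comp] at h2
      exact h2
    rw [hprod] at hspec
    have hpos : (0:ℝ) < (((c.blocks.map Nat.factorial).prod : ℕ) : ℝ) := by
      have : ∀ x ∈ c.blocks.map Nat.factorial, 0 < x := by
        intro x hx
        simp only [List.mem_map] at hx
        obtain ⟨y, _, rfl⟩ := hx
        exact Nat.factorial_pos y
      exact_mod_cast List.prod_pos this
    show (n.factorial : ℝ) / (((c.blocks.map Nat.factorial).prod : ℕ) : ℝ)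
        = (Nat.multinomial Finset.univ (fun k : Fin m => c.blocks.getD (k : ℕ) 0) : ℝ)
    rw [div_eq_iff (ne_of_gt hpos)]
    have := congrArg (Nat.cast : ℕ → ℝ) hspec
    push_cast at this ⊢
    linarith [this]

end StmtAuxAll


section StmtAux
open Finset

theorem stmt5_final (n : ℕ) (hn : 2 ≤ n) :
    (∑ m ∈ Finset.Icc 1 n,
        ∑ c ∈ Finset.univ.filter (fun c : Composition n => c.length = m),
          ((-1 : ℝ) ^ (m + 1) / m) *
            ((n.factorial : ℝ) / ((c.blocks.map Nat.factorial).prod : ℝ)) *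
            ((2 : ℝ) ^ n - 2 * m))
      = 2 * (-1 : ℝ) ^ n := by
  have hinner : ∀ m ∈ Icc 1 n,
      (∑ c ∈ Finset.univ.filter (fun c : Composition n => c.length = m),
          ((-1 : ℝ) ^ (m + 1) / m) *
            ((n.factorial : ℝ) / ((c.blocks.map Nat.factorial).prod : ℝ)) *
            ((2 : ℝ) ^ n - 2 * m))
      = ((-1 : ℝ) ^ (m + 1) / m) * W n m * ((2 : ℝ) ^ n - 2 * m) := by
    intro m hm
    rw [← Finset.sum_mul, ← Finset.mul_sum]
    congr 1
    congr 1
    rw [bridge n m]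
    have h := U_eq_W n (Finset.univ : Finset (Fin m))
    rw [Finset.card_univ, Fintype.card_fin] at h
    unfold U at h
    rw [← h]
    refine Finset.sum_congr ?_ (fun _ _ => rfl)
    ext f
    simp [Finset.mem_filter]
  rw [Finset.sum_congr rfl hinner]
  have split : ∀ m ∈ Icc 1 n,
      ((-1 : ℝ) ^ (m + 1) / m) * W n m * ((2 : ℝ) ^ n - 2 * m)
      = (2:ℝ)^n * (((-1 : ℝ) ^ (m + 1) / m) * W n m)
        + (-2) * ((-1 : ℝ) ^ (m + 1) * W n m) := by
    intro m hm
    simp only [mem_Icc] at hm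
    have hm0 : (m:ℝ) ≠ 0 := Nat.cast_ne_zero.2 (by omega)
    field_simp
    ring
  rw [Finset.sum_congr rfl split, Finset.sum_add_distrib, ← Finset.mul_sum, ← Finset.mul_sum]
  have h2 := idII n hn
  have h1 := idI n (by omega)
  unfold W at h1 h2 ⊢
  rw [h1, h2]
  rw [pow_succ]
  ring


/-- For `n ≥ 2`,
`Σ_{m=1}^n Σ_{λ₁+⋯+λ_m=n, λ_j≥1} ((−1)^{m+1}/m) · (n!/(λ₁!⋯λ_m!)) · (2^n − 2m)
  = 2·(−1)^n`. -/
theorem stmt_5 (n : ℕ) (hn : 2 ≤ n) :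
    (∑ m ∈ Finset.Icc 1 n,
        ∑ c ∈ Finset.univ.filter (fun c : Composition n => c.length = m),
          ((-1 : ℝ) ^ (m + 1) / m) *
            ((n.factorial : ℝ) / ((c.blocks.map Nat.factorial).prod : ℝ)) *
            ((2 : ℝ) ^ n - 2 * m))
      = 2 * (-1 : ℝ) ^ n := stmt5_final n hn
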